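/- arXiv:2301.11038 — 7 statements merged into one kernel-verified Lean document; each statement's English description precedes it below -/
import Mathlib

section
/- The function φ(s) = (∫₀^s sinh(u)^{n-1} du) / sinh(s)^{n-1}, extended by φ(0) = 0, satisfies φ'(s) > 0 for all s in (0, s0]. -/
open Real

theorem stmt2 (n : ℕ) (hn : 2 ≤ n) (s0 : ℝ) (hs0 : 0 < s0)
    (φ : ℝ → ℝ) (hφ0 : φ 0 = 0)
    (hφ : ∀ s > (0:ℝ), φ s = (∫ u in (0:ℝ)..s, Real.sinh u ^ (n - 1)) / Real.sinh s ^ (n - 1)) :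
    ∀ s ∈ Set.Ioc (0:ℝ) s0, 0 < deriv φ s := by
  obtain ⟨k, rfl⟩ : ∃ k, n = k + 2 := ⟨n - 2, by omega⟩
  have hsub : k + 2 - 1 = k + 1 := rfl
  simp only [hsub] at hφ
  set m : ℕ := k + 1 with hmdef
  set f : ℝ → ℝ := fun u => Real.sinh u ^ m with hf
  have hfc : Continuous f := Real.continuous_sinh.pow m
  set I : ℝ → ℝ := fun s => ∫ u in (0:ℝ)..s, Real.sinh u ^ m with hI
  have hIder : ∀ t : ℝ, HasDerivAt I (Real.sinh t ^ m) t := fun t =>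
    intervalIntegral.integral_hasDerivAt_right (hfc.intervalIntegrable _ _)
      (hfc.stronglyMeasurableAtFilter _ _) hfc.continuousAt
  have hIcont : Continuous I := by
    rw [continuous_iff_continuousAt]
    exact fun t => (hIder t).continuousAt
  have hI0 : I 0 = 0 := intervalIntegral.integral_same
  intro s hs
  obtain ⟨hs1, hs2⟩ := hs
  have hsinh : 0 < Real.sinh s := Real.sinh_pos_iff.2 hs1
  -- key inequality: (m : ℝ) * cosh s * I s < sinh s ^ (m + 1)
  have key : (m : ℝ) * Real.cosh s * I s < Real.sinh s ^ (m + 1) := by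
    set F : ℝ → ℝ := fun t => Real.sinh t ^ (m + 1) / ((m : ℝ) * Real.cosh t) - I t with hF
    have hm0 : (0:ℝ) < (m:ℝ) := by rw [hmdef]; push_cast; linarith
    have hcosh : ∀ t : ℝ, (0:ℝ) < (m : ℝ) * Real.cosh t := fun t =>
      mul_pos hm0 (Real.cosh_pos t)
    have hFder : ∀ t : ℝ, HasDerivAt F
        ((((m:ℝ)+1) * Real.sinh t ^ m * Real.cosh t * ((m : ℝ) * Real.cosh t)
          - Real.sinh t ^ (m+1) * ((m:ℝ) * Real.sinh t)) / ((m:ℝ) * Real.cosh t)^2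
          - Real.sinh t ^ m) t := by
      intro t
      have hN : HasDerivAt (fun x => Real.sinh x ^ (m+1))
          (((m:ℝ)+1) * Real.sinh t ^ m * Real.cosh t) t := by
        have := (Real.hasDerivAt_sinh t).fun_pow (m+1)
        simpa [Nat.add_sub_cancel] using this
      have hD : HasDerivAt (fun x => (m:ℝ) * Real.cosh x) ((m:ℝ) * Real.sinh t) t :=
        (Real.hasDerivAt_cosh t).const_mul _
      exact (hN.div hD (ne_of_gt (hcosh t))).sub (hIder t)
    have hmono : StrictMonoOn F (Set.Icc 0 s) := by
      apply strictMonoOn_of_deriv_pos (convex_Icc 0 s)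
      · apply ContinuousOn.sub
        · exact (Real.continuous_sinh.pow (m+1)).continuousOn.div
            (continuous_const.mul Real.continuous_cosh).continuousOn
            (fun t _ => ne_of_gt (hcosh t))
        · exact hIcont.continuousOn
      · intro t ht
        rw [interior_Icc] at ht
        rw [(hFder t).deriv]
        have ha : 0 < Real.sinh t := Real.sinh_pos_iff.2 ht.1
        have hc : 0 < Real.cosh t := Real.cosh_pos t
        have hcs : Real.cosh t ^ 2 = Real.sinh t ^ 2 + 1 := Real.cosh_sq t
        rw [div_sub' (by positivity : ((m:ℝ) * Real.cosh t)^2 ≠ 0)]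
        apply div_pos _ (by positivity)
        have hnum : ((m:ℝ)+1) * Real.sinh t ^ m * Real.cosh t * ((m : ℝ) * Real.cosh t)
              - Real.sinh t ^ (m+1) * ((m:ℝ) * Real.sinh t)
              - ((m:ℝ) * Real.cosh t)^2 * Real.sinh t ^ m
            = (m:ℝ) * Real.sinh t ^ m := by
          rw [pow_succ]
          linear_combination ((m:ℝ) * Real.sinh t ^ m) * hcs
        rw [hnum]
        exact mul_pos hm0 (pow_pos ha m)
    have h0 : F 0 = 0 := by
      simp [hF, hI0, Real.sinh_zero, zero_pow (Nat.succ_ne_zero m)]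
    have := hmono (Set.left_mem_Icc.2 hs1.le) (Set.mem_Icc.2 ⟨hs1.le, le_refl s⟩) hs1
    rw [h0] at this
    have hc : 0 < (m : ℝ) * Real.cosh s := hcosh s
    have : I s < Real.sinh s ^ (m+1) / ((m:ℝ) * Real.cosh s) := by
      have := this
      simp only [hF] at this
      linarith
    calc (m : ℝ) * Real.cosh s * I s
        < (m : ℝ) * Real.cosh s * (Real.sinh s ^ (m+1) / ((m:ℝ) * Real.cosh s)) := by
          exact (mul_lt_mul_iff_right₀ hc).2 this
      _ = Real.sinh s ^ (m+1) := by field_simp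
  -- derivative of φ at s
  have hder : HasDerivAt φ
      ((Real.sinh s ^ m * Real.sinh s ^ m
        - I s * ((m:ℝ) * Real.sinh s ^ (m-1) * Real.cosh s)) / (Real.sinh s ^ m)^2) s := by
    have hg : HasDerivAt (fun x => Real.sinh x ^ m)
        ((m:ℝ) * Real.sinh s ^ (m-1) * Real.cosh s) s := (Real.hasDerivAt_sinh s).pow m
    have hne : Real.sinh s ^ m ≠ 0 := pow_ne_zero _ (ne_of_gt hsinh)
    have h1 : HasDerivAt (fun x => I x / Real.sinh x ^ m)
        ((Real.sinh s ^ m * Real.sinh s ^ m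
          - I s * ((m:ℝ) * Real.sinh s ^ (m-1) * Real.cosh s)) / (Real.sinh s ^ m)^2) s :=
      (hIder s).div hg hne
    apply h1.congr_of_eventuallyEq
    filter_upwards [Ioi_mem_nhds hs1] with x hx
    exact hφ x hx
  rw [hder.deriv]
  apply div_pos _ (by positivity)
  have hkm : m - 1 = k := rfl
  rw [hkm]
  have e1 : Real.sinh s ^ m * Real.sinh s ^ m
      - I s * ((m:ℝ) * Real.sinh s ^ k * Real.cosh s)
      = Real.sinh s ^ k * (Real.sinh s ^ (m+1) - (m:ℝ) * Real.cosh s * I s) := by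
    rw [hmdef]; push_cast; ring
  rw [e1]
  have : 0 < Real.sinh s ^ (m+1) - (m:ℝ) * Real.cosh s * I s := sub_pos.2 key
  positivity
end

section
/- The function φ(s) = (∫₀^s sin(u)^{n-1} du) / sin(s)^{n-1}, extended by φ(0) = 0, satisfies φ'(s) > 0 for all s in (0, s0], where 0 < s0 < π. -/
open Real intervalIntegral

private lemma auxFderiv (m : ℕ) (t : ℝ) :
    HasDerivAt (fun x => ∫ u in (0:ℝ)..x, Real.sin u ^ m) (Real.sin t ^ m) t := by
  exact intervalIntegral.integral_hasDerivAt_right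
    ((Real.continuous_sin.pow m).intervalIntegrable _ _)
    ((Real.continuous_sin.pow m).stronglyMeasurableAtFilter _ _)
    (Real.continuous_sin.pow m).continuousAt

private lemma auxFnonneg (m : ℕ) (t : ℝ) (h0 : 0 ≤ t) (h1 : t ≤ Real.pi) :
    0 ≤ ∫ u in (0:ℝ)..t, Real.sin u ^ m := by
  apply intervalIntegral.integral_nonneg h0
  intro u hu
  exact pow_nonneg (Real.sin_nonneg_of_nonneg_of_le_pi hu.1 (hu.2.trans h1)) m

private lemma auxHderiv (n : ℕ) (hn : 2 ≤ n) (t : ℝ) :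
    HasDerivAt (fun x => Real.sin x ^ n -
      ((n:ℝ) - 1) * Real.cos x * ∫ u in (0:ℝ)..x, Real.sin u ^ (n-1))
      (Real.sin t ^ (n-1) * Real.cos t +
        ((n:ℝ) - 1) * Real.sin t * ∫ u in (0:ℝ)..t, Real.sin u ^ (n-1)) t := by
  have h1 : HasDerivAt (fun x => Real.sin x ^ n) ((n:ℝ) * Real.sin t ^ (n-1) * Real.cos t) t :=
    (Real.hasDerivAt_sin t).pow n
  have h2 : HasDerivAt (fun x => ((n:ℝ) - 1) * Real.cos x * ∫ u in (0:ℝ)..x, Real.sin u ^ (n-1))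
      ((((n:ℝ) - 1) * (-Real.sin t)) * (∫ u in (0:ℝ)..t, Real.sin u ^ (n-1)) +
        (((n:ℝ) - 1) * Real.cos t) * Real.sin t ^ (n-1)) t :=
    (((Real.hasDerivAt_cos t).const_mul ((n:ℝ) - 1)).mul (auxFderiv (n-1) t))
  have := h1.sub h2
  exact this.congr_deriv (by ring)

private lemma auxHpos (n : ℕ) (hn : 2 ≤ n) (s : ℝ) (hs : 0 < s) (hsπ : s < Real.pi) :
    0 < Real.sin s ^ n - ((n:ℝ) - 1) * Real.cos s * ∫ u in (0:ℝ)..s, Real.sin u ^ (n-1) := by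
  have hsin : 0 < Real.sin s := Real.sin_pos_of_pos_of_lt_pi hs hsπ
  have hF : 0 ≤ ∫ u in (0:ℝ)..s, Real.sin u ^ (n-1) := auxFnonneg _ s hs.le hsπ.le
  have hn1 : (0:ℝ) ≤ (n:ℝ) - 1 := by
    have : (2:ℝ) ≤ n := by exact_mod_cast hn
    linarith
  rcases le_or_gt (Real.cos s) 0 with hc | hc
  · have : 0 < Real.sin s ^ n := pow_pos hsin n
    nlinarith [mul_nonneg hn1 hF]
  · -- cos s > 0 so s < π/2
    have hs2 : s < Real.pi / 2 := by
      by_contra h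
      push_neg at h
      have := Real.cos_nonpos_of_pi_div_two_le_of_le h (by linarith [Real.pi_pos])
      linarith
    set h : ℝ → ℝ := fun x => Real.sin x ^ n -
      ((n:ℝ) - 1) * Real.cos x * ∫ u in (0:ℝ)..x, Real.sin u ^ (n-1) with hh
    have hmono : StrictMonoOn h (Set.Icc 0 s) := by
      apply strictMonoOn_of_deriv_pos (convex_Icc 0 s)
      · exact Continuous.continuousOn (by
          have : Differentiable ℝ h := fun x => (auxHderiv n hn x).differentiableAt
          exact this.continuous)
      · intro t ht
        rw [interior_Icc] at ht
        obtain ⟨ht1, ht2⟩ := ht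
        rw [(auxHderiv n hn t).deriv]
        have hsint : 0 < Real.sin t := Real.sin_pos_of_pos_of_lt_pi ht1 (ht2.trans hsπ)
        have hcost : 0 < Real.cos t := Real.cos_pos_of_mem_Ioo
          ⟨by linarith [Real.pi_pos], by linarith⟩
        have hFt : 0 ≤ ∫ u in (0:ℝ)..t, Real.sin u ^ (n-1) :=
          auxFnonneg _ t ht1.le (by linarith)
        have := pow_pos hsint (n-1)
        positivity
    have h0 : h 0 = 0 := by
      simp [hh, intervalIntegral.integral_same, zero_pow (by omega : n ≠ 0)]
    have := hmono (Set.left_mem_Icc.2 hs.le) (Set.right_mem_Icc.2 hs.le) hs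
    rw [h0] at this
    exact this

theorem stmt3 (n : ℕ) (hn : 2 ≤ n) (s0 : ℝ) (hs0 : 0 < s0) (hs0' : s0 < Real.pi)
    (φ : ℝ → ℝ) (hφ0 : φ 0 = 0)
    (hφ : ∀ s > (0:ℝ), φ s = (∫ u in (0:ℝ)..s, Real.sin u ^ (n - 1)) / Real.sin s ^ (n - 1)) :
    ∀ s ∈ Set.Ioc (0:ℝ) s0, 0 < deriv φ s := by
  rintro s ⟨hs, hss0⟩
  have hsπ : s < Real.pi := lt_of_le_of_lt hss0 hs0'
  have hsin : 0 < Real.sin s := Real.sin_pos_of_pos_of_lt_pi hs hsπ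
  have hgne : Real.sin s ^ (n-1) ≠ 0 := (pow_pos hsin _).ne'
  -- φ equals the quotient near s
  have heq : φ =ᶠ[nhds s]
      fun t => (∫ u in (0:ℝ)..t, Real.sin u ^ (n-1)) / Real.sin t ^ (n-1) := by
    filter_upwards [Ioi_mem_nhds hs] with t ht using hφ t ht
  rw [heq.deriv_eq]
  have hg : HasDerivAt (fun t => Real.sin t ^ (n-1))
      ((↑(n-1):ℝ) * Real.sin s ^ (n-1-1) * Real.cos s) s := (Real.hasDerivAt_sin s).pow (n-1)
  have hdiv := (auxFderiv (n-1) s).div hg hgne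
  rw [show deriv (fun t => (∫ u in (0:ℝ)..t, Real.sin u ^ (n-1)) / Real.sin t ^ (n-1)) s = _ from hdiv.deriv]
  apply div_pos
  · have e1 : n - 1 - 1 = n - 2 := by omega
    have e2 : (↑(n-1):ℝ) = (n:ℝ) - 1 := by
      have : (1:ℕ) ≤ n := by omega
      push_cast [Nat.cast_sub this]
      ring
    have e3 : Real.sin s ^ (n-1) * Real.sin s ^ (n-1)
        = Real.sin s ^ (n-2) * Real.sin s ^ n := by
      rw [← pow_add, ← pow_add]; congr 1; omega
    rw [e1, e2]
    have key : Real.sin s ^ (n-1) * Real.sin s ^ (n-1) -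
        (∫ u in (0:ℝ)..s, Real.sin u ^ (n-1)) * (((n:ℝ) - 1) * Real.sin s ^ (n-2) * Real.cos s)
        = Real.sin s ^ (n-2) *
          (Real.sin s ^ n - ((n:ℝ) - 1) * Real.cos s * ∫ u in (0:ℝ)..s, Real.sin u ^ (n-1)) := by
      rw [e3]; ring
    rw [key]
    exact mul_pos (pow_pos hsin _) (auxHpos n hn s hs hsπ)
  · positivity
end

section
/- For every integer n > 2 and every s in (0, s0] with s0 > 0, the quantity ω(s) = sinh^n(s) - (n-1)·cosh(s)·∫₀^s sinh^{n-1}(u) du is positive. -/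
theorem stmt8 (n : ℕ) (hn : 2 < n) (s0 : ℝ) (hs0 : 0 < s0) :
    ∀ s ∈ Set.Ioc (0:ℝ) s0,
      0 < Real.sinh s ^ n - ((n:ℝ) - 1) * Real.cosh s * ∫ u in (0:ℝ)..s, Real.sinh u ^ (n - 1) := by
  obtain ⟨m, rfl⟩ : ∃ m, n = m + 1 := ⟨n - 1, by omega⟩
  set g : ℝ → ℝ := fun s => Real.sinh s ^ (m + 1) / Real.cosh s
      - (m : ℝ) * ∫ u in (0:ℝ)..s, Real.sinh u ^ m with hgdef
  have hcosh : ∀ x : ℝ, Real.cosh x ≠ 0 := fun x => (Real.cosh_pos x).ne'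
  have hder : ∀ x : ℝ, HasDerivAt g (Real.sinh x ^ m / Real.cosh x ^ 2) x := by
    intro x
    have h1 : HasDerivAt (fun s => Real.sinh s ^ (m + 1))
        ((m + 1 : ℕ) * Real.sinh x ^ m * Real.cosh x) x := by
      simpa using (Real.hasDerivAt_sinh x).fun_pow (m + 1)
    have h2 := h1.div (Real.hasDerivAt_cosh x) (hcosh x)
    have h3 : HasDerivAt (fun s => ∫ u in (0:ℝ)..s, Real.sinh u ^ m)
        (Real.sinh x ^ m) x :=
      ((Real.continuous_sinh.pow m).integral_hasStrictDerivAt 0 x).hasDerivAt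
    have h4 := h2.sub (h3.const_mul (m : ℝ))
    refine h4.congr_deriv ?_
    symm
    have hc : Real.cosh x ^ 2 = Real.sinh x ^ 2 + 1 := Real.cosh_sq x
    field_simp
    push_cast
    linear_combination (-(Real.sinh x ^ m)) * hc
  have hcont : Continuous g :=
    continuous_iff_continuousAt.mpr fun x => (hder x).differentiableAt.continuousAt
  have hmono : StrictMonoOn g (Set.Icc 0 s0) := by
    apply strictMonoOn_of_deriv_pos (convex_Icc 0 s0) hcont.continuousOn
    intro x hx
    rw [interior_Icc] at hx
    rw [(hder x).deriv]
    exact div_pos (pow_pos (Real.sinh_pos_iff.mpr hx.1) m) (pow_pos (Real.cosh_pos x) 2)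
  intro s hs
  have hg0 : g 0 = 0 := by simp [hgdef]
  have hgs : 0 < g s := by
    have := hmono (Set.mem_Icc.mpr ⟨le_refl 0, hs0.le⟩)
      (Set.mem_Icc.mpr ⟨hs.1.le, hs.2⟩) hs.1
    rwa [hg0] at this
  have hcs : 0 < Real.cosh s := Real.cosh_pos s
  have key : 0 < Real.cosh s * g s := mul_pos hcs hgs
  have hexp : Real.cosh s * g s
      = Real.sinh s ^ (m + 1)
        - (((m + 1 : ℕ) : ℝ) - 1) * Real.cosh s * ∫ u in (0:ℝ)..s, Real.sinh u ^ m := by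
    simp only [hgdef]
    push_cast
    field_simp
    ring
  rw [hexp] at key
  simpa using key
end

section
/- For every integer n > 2 and every s in (0, π), the quantity ω(s) = sin^n(s) - (n-1)·cos(s)·∫₀^s sin^{n-1}(u) du is positive. -/
open Real intervalIntegral

private lemma cont_sinpow (m : ℕ) : Continuous fun u : ℝ => Real.sin u ^ m :=
  Real.continuous_sin.pow m

private lemma int_pos (m : ℕ) {s : ℝ} (hs0 : 0 < s) (hsπ : s ≤ Real.pi) :
    0 < ∫ u in (0:ℝ)..s, Real.sin u ^ m := by
  apply intervalIntegral.intervalIntegral_pos_of_pos_on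
    ((cont_sinpow m).intervalIntegrable 0 s)
  · intro x hx
    exact pow_pos (Real.sin_pos_of_pos_of_lt_pi hx.1 (lt_of_lt_of_le hx.2 hsπ)) m
  · exact hs0

private lemma hasDeriv_omega (n : ℕ) (x : ℝ) :
    HasDerivAt (fun s => Real.sin s ^ n -
        ((n:ℝ) - 1) * Real.cos s * ∫ u in (0:ℝ)..s, Real.sin u ^ (n - 1))
      (Real.sin x ^ (n-1) * Real.cos x +
        ((n:ℝ) - 1) * Real.sin x * ∫ u in (0:ℝ)..x, Real.sin u ^ (n - 1)) x := by
  have hI : HasDerivAt (fun s => ∫ u in (0:ℝ)..s, Real.sin u ^ (n - 1))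
      (Real.sin x ^ (n-1)) x :=
    intervalIntegral.integral_hasDerivAt_right
      ((cont_sinpow (n-1)).intervalIntegrable 0 x)
      ((cont_sinpow (n-1)).stronglyMeasurableAtFilter _ _)
      (cont_sinpow (n-1)).continuousAt
  have h1 : HasDerivAt (fun s => Real.sin s ^ n)
      ((n:ℝ) * Real.sin x ^ (n-1) * Real.cos x) x :=
    (Real.hasDerivAt_sin x).pow n
  have h2 : HasDerivAt (fun s => ((n:ℝ) - 1) * Real.cos s * ∫ u in (0:ℝ)..s, Real.sin u ^ (n - 1))
      (((n:ℝ) - 1) * (-Real.sin x) * (∫ u in (0:ℝ)..x, Real.sin u ^ (n - 1)) +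
        ((n:ℝ) - 1) * Real.cos x * Real.sin x ^ (n-1)) x :=
    (((Real.hasDerivAt_cos x).const_mul ((n:ℝ)-1)).mul hI)
  have := h1.sub h2
  exact this.congr_deriv (by ring)

theorem stmt9 (n : ℕ) (hn : 2 < n) :
    ∀ s ∈ Set.Ioo (0:ℝ) Real.pi,
      0 < Real.sin s ^ n - ((n:ℝ) - 1) * Real.cos s * ∫ u in (0:ℝ)..s, Real.sin u ^ (n - 1) := by
  intro s hs
  obtain ⟨hs0, hsπ⟩ := hs
  have hsin : 0 < Real.sin s := Real.sin_pos_of_pos_of_lt_pi hs0 hsπ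
  have hn1 : (0:ℝ) < (n:ℝ) - 1 := by
    have : (2:ℝ) < n := by exact_mod_cast hn
    linarith
  by_cases hc : Real.cos s ≤ 0
  · have hI := int_pos (n-1) hs0 hsπ.le
    have : 0 ≤ ((n:ℝ) - 1) * (-Real.cos s) * ∫ u in (0:ℝ)..s, Real.sin u ^ (n - 1) := by
      apply mul_nonneg (mul_nonneg hn1.le (by linarith)) hI.le
    nlinarith [pow_pos hsin n]
  · push_neg at hc
    -- s < π/2
    have hs2 : s < Real.pi / 2 := by
      by_contra h
      push_neg at h
      have : Real.cos s ≤ 0 := Real.cos_nonpos_of_pi_div_two_le_of_le h (by linarith [Real.pi_pos])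
      linarith
    set f := fun s => Real.sin s ^ n -
        ((n:ℝ) - 1) * Real.cos s * ∫ u in (0:ℝ)..s, Real.sin u ^ (n - 1) with hf
    have hmono : StrictMonoOn f (Set.Icc 0 s) := by
      apply strictMonoOn_of_deriv_pos (convex_Icc 0 s)
      · exact fun x _ => ((hasDeriv_omega n x).continuousAt).continuousWithinAt
      · intro x hx
        rw [interior_Icc] at hx
        rw [(hasDeriv_omega n x).deriv]
        have hsinx : 0 < Real.sin x :=
          Real.sin_pos_of_pos_of_lt_pi hx.1 (hx.2.trans hsπ)
        have hcosx : 0 < Real.cos x :=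
          Real.cos_pos_of_mem_Ioo ⟨by linarith [Real.pi_pos, hx.1], hx.2.trans hs2⟩
        have hI := int_pos (n-1) hx.1 (le_of_lt (hx.2.trans hsπ))
        positivity
    have h0 : f 0 = 0 := by
      simp [hf, Real.sin_zero, Real.cos_zero]
      omega
    have := hmono (Set.left_mem_Icc.mpr hs0.le) (Set.right_mem_Icc.mpr hs0.le) hs0
    rw [h0] at this
    exact this
end

section
/- For n ≥ 2, the hyperbolic function φ(s) = (∫₀^s sinh(u)^{n-1} du)/sinh(s)^{n-1} satisfies φ''(s) < 0 for all s > 0. -/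
noncomputable def Fm (m : ℕ) (s : ℝ) : ℝ := ∫ u in (0:ℝ)..s, Real.sinh u ^ m

lemma Fm_hasDerivAt (m : ℕ) (s : ℝ) : HasDerivAt (Fm m) (Real.sinh s ^ m) s := by
  have hc : Continuous fun u : ℝ => Real.sinh u ^ m := Real.continuous_sinh.pow m
  exact intervalIntegral.integral_hasDerivAt_right (hc.intervalIntegrable _ _)
    (hc.stronglyMeasurableAtFilter _ _) hc.continuousAt

/-- The target upper bound for `Fm`. -/
noncomputable def Gm (m : ℕ) (s : ℝ) : ℝ :=
  Real.cosh s * Real.sinh s ^ (m + 1) / (1 + m * Real.cosh s ^ 2)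

lemma Q_pos (m : ℕ) (s : ℝ) : 0 < 1 + (m:ℝ) * Real.cosh s ^ 2 := by
  have := Real.cosh_pos (x := s)
  positivity

lemma Gm_hasDerivAt (m : ℕ) (s : ℝ) :
    HasDerivAt (Gm m)
      (((Real.sinh s * Real.sinh s ^ (m + 1) +
          Real.cosh s * ((m + 1) * Real.sinh s ^ m * Real.cosh s)) *
          (1 + m * Real.cosh s ^ 2) -
        Real.cosh s * Real.sinh s ^ (m + 1) *
          ((m:ℝ) * (2 * Real.cosh s ^ 1 * Real.sinh s))) /
        (1 + m * Real.cosh s ^ 2) ^ 2) s := by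
  have hP : HasDerivAt (fun x => Real.cosh x * Real.sinh x ^ (m + 1))
      (Real.sinh s * Real.sinh s ^ (m + 1) +
        Real.cosh s * ((m + 1) * Real.sinh s ^ m * Real.cosh s)) s := by
    have h1 : HasDerivAt Real.cosh (Real.sinh s) s := Real.hasDerivAt_cosh s
    have h2 : HasDerivAt (fun x => Real.sinh x ^ (m + 1))
        ((m + 1 : ℕ) * Real.sinh s ^ m * Real.cosh s) s :=
      (Real.hasDerivAt_sinh s).pow (m + 1)
    have := h1.mul h2
    refine this.congr_deriv ?_
    all_goals push_cast; ring
  have hQ : HasDerivAt (fun x => 1 + (m:ℝ) * Real.cosh x ^ 2)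
      ((m:ℝ) * (2 * Real.cosh s ^ 1 * Real.sinh s)) s := by
    have h2 : HasDerivAt (fun x => Real.cosh x ^ 2)
        ((2:ℕ) * Real.cosh s ^ 1 * Real.sinh s) s := (Real.hasDerivAt_cosh s).pow 2
    have := ((h2.const_mul (m:ℝ)).const_add 1)
    refine this.congr_deriv ?_
    all_goals push_cast; ring
  exact hP.div hQ (Q_pos m s).ne'

lemma Fm_lt_Gm (m : ℕ) {s : ℝ} (hs : 0 < s) : Fm m s < Gm m s := by
  have hmono : StrictMonoOn (fun x => Gm m x - Fm m x) (Set.Ici (0:ℝ)) := by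
    apply strictMonoOn_of_deriv_pos (convex_Ici 0)
    · apply ContinuousOn.sub
      · apply ContinuousOn.div
        · exact (Real.continuous_cosh.mul (Real.continuous_sinh.pow _)).continuousOn
        · exact (continuous_const.add (continuous_const.mul
            (Real.continuous_cosh.pow 2))).continuousOn
        · exact fun x _ => (Q_pos m x).ne'
      · exact fun x _ => ((Fm_hasDerivAt m x).differentiableAt.continuousAt).continuousWithinAt
    · intro x hx
      rw [interior_Ici] at hx
      have hx : (0:ℝ) < x := hx
      have hder := (Gm_hasDerivAt m x).sub (Fm_hasDerivAt m x)
      rw [HasDerivAt.deriv (f := fun x => Gm m x - Fm m x) hder]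
      have hσ : 0 < Real.sinh x := Real.sinh_pos_iff.2 hx
      have hc : Real.cosh x ^ 2 = Real.sinh x ^ 2 + 1 := by
        rw [Real.cosh_sq]
      have hQ := Q_pos m x
      rw [sub_pos, lt_div_iff₀ (by positivity)]
      have key : (Real.sinh x * Real.sinh x ^ (m + 1) +
          Real.cosh x * ((m + 1) * Real.sinh x ^ m * Real.cosh x)) *
          (1 + m * Real.cosh x ^ 2) -
          Real.cosh x * Real.sinh x ^ (m + 1) *
            ((m:ℝ) * (2 * Real.cosh x ^ 1 * Real.sinh x))
          = Real.sinh x ^ m * (1 + m * Real.cosh x ^ 2) ^ 2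
            + 2 * Real.sinh x ^ (m + 2) := by
        linear_combination (Real.sinh x ^ m * (1 + (m:ℝ) * Real.cosh x ^ 2)) * hc
      rw [key]
      nlinarith [pow_pos hσ (m + 2)]
  have h0 : (fun x => Gm m x - Fm m x) 0 = 0 := by
    simp [Gm, Fm, Real.sinh_zero]
  have h1 : 0 < Gm m s - Fm m s := by
    simpa [h0] using hmono (Set.self_mem_Ici) (Set.mem_Ici.2 hs.le) hs
  linarith

theorem stmt12 (n : ℕ) (hn : 2 ≤ n)
    (φ : ℝ → ℝ)
    (hφ : ∀ s > (0:ℝ), φ s = (∫ u in (0:ℝ)..s, Real.sinh u ^ (n - 1)) / Real.sinh s ^ (n - 1)) :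
    ∀ s > (0:ℝ), deriv (deriv φ) s < 0 := by
  intro s hs
  obtain ⟨k, rfl⟩ : ∃ k, n = k + 2 := ⟨n - 2, by omega⟩
  set m : ℕ := k + 1 with hm
  set g : ℝ → ℝ := fun x => Fm m x / Real.sinh x ^ m with hgdef
  set h : ℝ → ℝ := fun x => 1 - (m:ℝ) * (Real.cosh x * Fm m x) / Real.sinh x ^ (m + 1) with hhdef
  set H : ℝ → ℝ := fun x => (m:ℝ) *
      (((m + 1 : ℝ) * Real.cosh x ^ 2 - Real.sinh x ^ 2) * Fm m x
        - Real.cosh x * Real.sinh x ^ (m + 1)) / Real.sinh x ^ (m + 2) with hHdef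
  -- g has derivative h on (0, ∞)
  have hg : ∀ x > (0:ℝ), HasDerivAt g (h x) x := by
    intro x hx
    have hσ : 0 < Real.sinh x := Real.sinh_pos_iff.2 hx
    have hden : HasDerivAt (fun y => Real.sinh y ^ m)
        ((m : ℝ) * Real.sinh x ^ k * Real.cosh x) x := (Real.hasDerivAt_sinh x).pow m
    have := (Fm_hasDerivAt m x).div hden (by positivity)
    refine this.congr_deriv ?_
    rw [hhdef]
    field_simp
    ring
  -- h has derivative H on (0, ∞)
  have hH : ∀ x > (0:ℝ), HasDerivAt h (H x) x := by
    intro x hx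
    have hσ : 0 < Real.sinh x := Real.sinh_pos_iff.2 hx
    have hA : HasDerivAt (fun y => (m:ℝ) * (Real.cosh y * Fm m y))
        ((m:ℝ) * (Real.sinh x * Fm m x + Real.cosh x * Real.sinh x ^ m)) x :=
      ((Real.hasDerivAt_cosh x).mul (Fm_hasDerivAt m x)).const_mul (m:ℝ)
    have hD : HasDerivAt (fun y => Real.sinh y ^ (m + 1))
        (((m:ℝ) + 1) * Real.sinh x ^ m * Real.cosh x) x := by
      have := (Real.hasDerivAt_sinh x).pow (m + 1)
      refine this.congr_deriv ?_
      push_cast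
      ring
    have := (hA.div hD (by positivity)).const_sub 1
    refine this.congr_deriv ?_
    rw [hHdef]
    field_simp
    ring
  -- φ agrees with g near every positive point
  have hφg : ∀ x > (0:ℝ), φ =ᶠ[nhds x] g := by
    intro x hx
    exact Filter.eventuallyEq_of_mem (Ioi_mem_nhds hx) (fun y hy => hφ y hy)
  have hd1 : ∀ x > (0:ℝ), deriv φ x = h x := by
    intro x hx
    rw [(hφg x hx).deriv_eq, (hg x hx).deriv]
  have hd1' : deriv φ =ᶠ[nhds s] h :=
    Filter.eventuallyEq_of_mem (Ioi_mem_nhds hs) (fun y hy => hd1 y hy)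
  rw [hd1'.deriv_eq, (hH s hs).deriv]
  -- final sign computation
  have hσ : 0 < Real.sinh s := Real.sinh_pos_iff.2 hs
  have hc : Real.cosh s ^ 2 = Real.sinh s ^ 2 + 1 := Real.cosh_sq s
  have hQ : (0:ℝ) < 1 + (m:ℝ) * Real.cosh s ^ 2 := Q_pos m s
  have hFG : (1 + (m:ℝ) * Real.cosh s ^ 2) * Fm m s
      < Real.cosh s * Real.sinh s ^ (m + 1) := by
    have := Fm_lt_Gm m hs
    rw [Gm, lt_div_iff₀ hQ] at this
    linarith
  have hcoef : ((m:ℝ) + 1) * Real.cosh s ^ 2 - Real.sinh s ^ 2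
      = 1 + (m:ℝ) * Real.cosh s ^ 2 := by
    rw [hc]; ring
  apply div_neg_of_neg_of_pos
  · have hm1 : (0:ℝ) < (m:ℝ) := by positivity
    have : (((m:ℝ) + 1) * Real.cosh s ^ 2 - Real.sinh s ^ 2) * Fm m s
        - Real.cosh s * Real.sinh s ^ (m + 1) < 0 := by
      rw [hcoef]; linarith
    exact mul_neg_of_pos_of_neg hm1 this
  · positivity
end

section
/- For n ≥ 2, the spherical function φ(s) = (∫₀^s sin(u)^{n-1} du)/sin(s)^{n-1} satisfies φ''(s) > 0 for all s in (0, π). -/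
open Real Set

private lemma hasDerivAt_I (m : ℕ) (s : ℝ) :
    HasDerivAt (fun t => ∫ u in (0:ℝ)..t, Real.sin u ^ m) (Real.sin s ^ m) s :=
  ((Real.continuous_sin.pow m).integral_hasStrictDerivAt 0 s).hasDerivAt

private lemma hasDerivAt_K (k : ℕ) (s : ℝ) :
    HasDerivAt (fun t => (∫ u in (0:ℝ)..t, Real.sin u ^ (k+1))
        - Real.sin t ^ (k+2) * Real.cos t / (1 + (k+1 : ℝ) * Real.cos t ^ 2))
      (2 * Real.sin s ^ (k+3) / (1 + (k+1 : ℝ) * Real.cos s ^ 2) ^ 2) s := by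
  have hD : (1 + (k+1 : ℝ) * Real.cos s ^ 2) ≠ 0 := by positivity
  have hnum : HasDerivAt (fun t => Real.sin t ^ (k+2) * Real.cos t)
      (((k+2 : ℕ) * Real.sin s ^ (k+1) * Real.cos s) * Real.cos s
        + Real.sin s ^ (k+2) * (-Real.sin s)) s := by
    refine (((Real.hasDerivAt_sin s).pow (k+2)).mul (Real.hasDerivAt_cos s)).congr_deriv ?_
    simp only [Pi.pow_apply]
    push_cast
    ring
  have hden : HasDerivAt (fun t => 1 + (k+1 : ℝ) * Real.cos t ^ 2)
      ((k+1 : ℝ) * (2 * Real.cos s ^ 1 * (-Real.sin s))) s := by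
    simpa using (((Real.hasDerivAt_cos s).pow 2).const_mul ((k+1 : ℝ))).const_add 1
  have hF := hnum.div hden hD
  have := (hasDerivAt_I (k+1) s).sub hF
  refine this.congr_deriv (Eq.symm ?_)
  have hsc : Real.sin s ^ 2 = 1 - Real.cos s ^ 2 := Real.sin_sq s
  field_simp
  push_cast
  linear_combination (Real.sin s * Real.sin s ^ k * (1 + ((k:ℝ)+1) * Real.cos s ^ 2)) * hsc

private lemma key (k : ℕ) {s : ℝ} (hs0 : 0 < s) (hsπ : s < Real.pi) :
    Real.sin s ^ (k+2) * Real.cos s <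
      (∫ u in (0:ℝ)..s, Real.sin u ^ (k+1)) * (1 + (k+1 : ℝ) * Real.cos s ^ 2) := by
  set K : ℝ → ℝ := fun t => (∫ u in (0:ℝ)..t, Real.sin u ^ (k+1))
      - Real.sin t ^ (k+2) * Real.cos t / (1 + (k+1 : ℝ) * Real.cos t ^ 2) with hK
  have mono : StrictMonoOn K (Set.Icc 0 Real.pi) := by
    apply strictMonoOn_of_deriv_pos (convex_Icc _ _)
    · exact fun t _ => ((hasDerivAt_K k t).differentiableAt.continuousAt).continuousWithinAt
    · intro x hx
      rw [interior_Icc] at hx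
      rw [(hasDerivAt_K k x).deriv]
      have hx' : 0 < Real.sin x := Real.sin_pos_of_pos_of_lt_pi hx.1 hx.2
      positivity
  have h0 : K 0 = 0 := by simp [hK]
  have hpos : 0 < K s := by
    rw [← h0]
    exact mono (Set.left_mem_Icc.2 Real.pi_pos.le) ⟨hs0.le, hsπ.le⟩ hs0
  have hD : (0:ℝ) < 1 + (k+1 : ℝ) * Real.cos s ^ 2 := by positivity
  rw [hK] at hpos
  simp only [sub_pos] at hpos
  exact (div_lt_iff₀ hD).mp hpos

theorem stmt13 (n : ℕ) (hn : 2 ≤ n)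
    (φ : ℝ → ℝ)
    (hφ : ∀ s ∈ Set.Ioo (0:ℝ) Real.pi,
      φ s = (∫ u in (0:ℝ)..s, Real.sin u ^ (n - 1)) / Real.sin s ^ (n - 1)) :
    ∀ s ∈ Set.Ioo (0:ℝ) Real.pi, 0 < deriv (deriv φ) s := by
  obtain ⟨k, hk⟩ : ∃ k, n - 1 = k + 1 := ⟨n - 2, by omega⟩
  rw [hk] at hφ
  set P : ℝ → ℝ := fun t => ∫ u in (0:ℝ)..t, Real.sin u ^ (k+1) with hP
  set ψ : ℝ → ℝ := fun t => P t / Real.sin t ^ (k+1) with hψdef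
  set ψ₁ : ℝ → ℝ := fun t => 1 - ((k+1:ℝ) * Real.cos t * P t) / Real.sin t ^ (k+2) with hψ₁def
  have hψd : ∀ x ∈ Set.Ioo (0:ℝ) Real.pi, HasDerivAt ψ (ψ₁ x) x := by
    intro x hx
    have hsin : 0 < Real.sin x := Real.sin_pos_of_pos_of_lt_pi hx.1 hx.2
    have hne : Real.sin x ^ (k+1) ≠ 0 := by positivity
    have hpow : HasDerivAt (fun t => Real.sin t ^ (k+1))
        (((k+1:ℕ) : ℝ) * Real.sin x ^ k * Real.cos x) x := by
      refine ((Real.hasDerivAt_sin x).pow (k+1)).congr_deriv ?_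
      push_cast
      ring
    have := (hasDerivAt_I (k+1) x).div hpow hne
    refine this.congr_deriv (Eq.symm ?_)
    rw [hψ₁def]
    simp only [hP]
    field_simp
    push_cast
    ring
  have hψ1d : ∀ x ∈ Set.Ioo (0:ℝ) Real.pi, HasDerivAt ψ₁
      (((k+1:ℝ) * Real.sin x ^ (k+1) *
        (P x * (1 + (k+1:ℝ) * Real.cos x ^ 2) - Real.sin x ^ (k+2) * Real.cos x)) /
        (Real.sin x ^ (k+2)) ^ 2) x := by
    intro x hx
    have hsin : 0 < Real.sin x := Real.sin_pos_of_pos_of_lt_pi hx.1 hx.2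
    have hne : Real.sin x ^ (k+2) ≠ 0 := by positivity
    have hnum : HasDerivAt (fun t => (k+1:ℝ) * Real.cos t * P t)
        ((k+1:ℝ) * (-Real.sin x) * P x + (k+1:ℝ) * Real.cos x * Real.sin x ^ (k+1)) x := by
      refine (((Real.hasDerivAt_cos x).const_mul ((k:ℝ)+1)).mul (hasDerivAt_I (k+1) x)).congr_deriv ?_
      ring
    have hden : HasDerivAt (fun t => Real.sin t ^ (k+2))
        (((k+2:ℕ) : ℝ) * Real.sin x ^ (k+1) * Real.cos x) x := by
      refine ((Real.hasDerivAt_sin x).pow (k+2)).congr_deriv ?_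
      push_cast
      ring
    have := (hnum.div hden hne).const_sub 1
    refine this.congr_deriv (Eq.symm ?_)
    have hsc : Real.sin x ^ 2 = 1 - Real.cos x ^ 2 := Real.sin_sq x
    rw [← neg_div]
    congr 1
    push_cast
    linear_combination (-((k:ℝ)+1) * Real.sin x ^ (k+1) * P x) * hsc
  intro s hs
  have hopen : Set.Ioo (0:ℝ) Real.pi ∈ nhds s := isOpen_Ioo.mem_nhds hs
  have deq : Set.EqOn (deriv φ) ψ₁ (Set.Ioo 0 Real.pi) := by
    intro x hx
    have hfe : φ =ᶠ[nhds x] ψ :=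
      Filter.eventually_of_mem (isOpen_Ioo.mem_nhds hx) (fun y hy => hφ y hy)
    rw [hfe.deriv_eq, (hψd x hx).deriv]
  have hfe2 : deriv φ =ᶠ[nhds s] ψ₁ :=
    Filter.eventually_of_mem hopen (fun y hy => deq hy)
  rw [hfe2.deriv_eq, (hψ1d s hs).deriv]
  have hsin : 0 < Real.sin s := Real.sin_pos_of_pos_of_lt_pi hs.1 hs.2
  have hkey := key k hs.1 hs.2
  apply div_pos
  · have h1 : (0:ℝ) < (k+1:ℝ) * Real.sin s ^ (k+1) := by positivity
    have h2 : 0 < P s * (1 + (k+1:ℝ) * Real.cos s ^ 2) - Real.sin s ^ (k+2) * Real.cos s :=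
      sub_pos.2 hkey
    exact mul_pos h1 h2
  · positivity
end

section
/- In the case n = 2, ε = 1 with φ(s) = (1 − cos s)/sin s: for all s, s0 with π/2 < s < s0 < π, the quantity φ'(s)·φ(s0) − φ'(s0)·φ(s) is negative (so the family F₁ of rotational CMC spheres in S²×ℝ fails the nesting criterion for large radii). -/
lemma deriv_phi (s : ℝ) (hs : Real.sin s ≠ 0) :
    deriv (fun s => (1 - Real.cos s) / Real.sin s) s
      = (1 - Real.cos s) / (Real.sin s) ^ 2 := by
  have h1 : HasDerivAt (fun s => 1 - Real.cos s) (Real.sin s) s := by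
    simpa using (Real.hasDerivAt_cos s).const_sub 1
  have h : HasDerivAt (fun s => (1 - Real.cos s) / Real.sin s) _ s := (h1.div (Real.hasDerivAt_sin s) hs)
  rw [h.deriv]
  have hsin := Real.sin_sq_add_cos_sq s
  field_simp
  nlinarith [sq_nonneg (Real.sin s)]

theorem stmt19 (φ : ℝ → ℝ) (hφ : ∀ s, φ s = (1 - Real.cos s) / Real.sin s) :
    ∀ s s0 : ℝ, Real.pi / 2 < s → s < s0 → s0 < Real.pi →
      deriv φ s * φ s0 - deriv φ s0 * φ s < 0 := by
  have hfe : φ = fun s => (1 - Real.cos s) / Real.sin s := funext hφ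
  subst hfe
  intro s s0 h1 h2 h3
  have hpi2 : (0:ℝ) < Real.pi / 2 := by positivity
  have hs0pos : 0 < s := lt_trans hpi2 h1
  have hs0lt : s < Real.pi := lt_trans h2 h3
  have hsin_s : 0 < Real.sin s := Real.sin_pos_of_pos_of_lt_pi hs0pos hs0lt
  have hsin_s0 : 0 < Real.sin s0 :=
    Real.sin_pos_of_pos_of_lt_pi (lt_trans hs0pos h2) h3
  have hcs : Real.cos s < 0 := Real.cos_neg_of_pi_div_two_lt_of_lt h1 (by linarith)
  have hcs0 : Real.cos s0 < 0 :=
    Real.cos_neg_of_pi_div_two_lt_of_lt (lt_trans h1 h2) (by linarith)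
  have hc : 0 < 1 - Real.cos s := by linarith
  have hd : 0 < 1 - Real.cos s0 := by linarith
  -- sin s0 < sin s
  have hanti : Real.sin s0 < Real.sin s := by
    have h1' : s - Real.pi / 2 ∈ Set.Icc 0 Real.pi := by
      constructor <;> [linarith; linarith [Real.pi_pos]]
    have h2' : s0 - Real.pi / 2 ∈ Set.Icc 0 Real.pi := by
      constructor <;> [linarith; linarith [Real.pi_pos]]
    have := Real.strictAntiOn_cos h1' h2' (by linarith)
    have e1 : Real.cos (s - Real.pi / 2) = Real.sin s := by
      rw [show s - Real.pi / 2 = -(Real.pi / 2 - s) by ring, Real.cos_neg,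
        Real.cos_pi_div_two_sub]
    have e2 : Real.cos (s0 - Real.pi / 2) = Real.sin s0 := by
      rw [show s0 - Real.pi / 2 = -(Real.pi / 2 - s0) by ring, Real.cos_neg,
        Real.cos_pi_div_two_sub]
    rwa [e1, e2] at this
  rw [deriv_phi s (ne_of_gt hsin_s), deriv_phi s0 (ne_of_gt hsin_s0)]
  rw [sub_neg]
  have key : Real.sin s * Real.sin s0 ^ 2 < Real.sin s ^ 2 * Real.sin s0 := by
    nlinarith [mul_pos (mul_pos hsin_s hsin_s0) (sub_pos.mpr hanti)]
  calc (1 - Real.cos s) / Real.sin s ^ 2 * ((1 - Real.cos s0) / Real.sin s0)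
      = (1 - Real.cos s) * (1 - Real.cos s0) / (Real.sin s ^ 2 * Real.sin s0) := by
        ring
    _ < (1 - Real.cos s) * (1 - Real.cos s0) / (Real.sin s * Real.sin s0 ^ 2) := by
        apply div_lt_div_of_pos_left (by positivity) (by positivity) key
    _ = (1 - Real.cos s0) / Real.sin s0 ^ 2 * ((1 - Real.cos s)/ Real.sin s) := by
        ring
end
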